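/- Let H be a complex inner product space of finite dimension N, let F = {f_i}_{i=1}^M be a frame for H, and let {q_i}_{i=1}^M be positive real weights with ∑_{i=1}^M 1/q_i = N. Then for every dual G = {g_i}_{i=1}^M of F, max_{1 ≤ i ≤ M} q_i |⟨f_i, g_i⟩| ≥ 1. -/

import Mathlib

/-- If `F = {f_i}_{i=1}^M` is a frame for an `N`-dimensional complex inner
product space and `{q_i}` are positive weights with `∑ 1/q_i = N`, then every dual `G` of
`F` satisfies `max_i q_i |⟨f_i, g_i⟩| ≥ 1`.  The paper's inner product `⟨a, b⟩` is
Mathlib's `⟪b, a⟫_ℂ`. -/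
theorem one_le_max_weighted_diag_inner
    {H : Type*} [NormedAddCommGroup H] [InnerProductSpace ℂ H] [FiniteDimensional ℂ H]
    {N M : ℕ} (hM : 0 < M) (hN : Module.finrank ℂ H = N)
    (F : Fin M → H) (hF : Submodule.span ℂ (Set.range F) = ⊤)
    (q : Fin M → ℝ) (hq : ∀ i, 0 < q i) (hqsum : ∑ i, 1 / q i = (N : ℝ))
    (G : Fin M → H) (hG : ∀ f : H, ∑ i, (inner ℂ (F i) f : ℂ) • G i = f) :
    1 ≤ ⨆ i, q i * ‖(inner ℂ (G i) (F i) : ℂ)‖ := by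
  classical
  have hNpos : 0 < (N : ℝ) := by
    have h0 : 0 < ∑ i, 1 / q i :=
      Finset.sum_pos (fun i _ => one_div_pos.mpr (hq i)) ⟨⟨0, hM⟩, Finset.mem_univ _⟩
    linarith [hqsum]
  set S := ⨆ i, q i * ‖(inner ℂ (G i) (F i) : ℂ)‖ with hS
  have hbdd : BddAbove (Set.range fun i => q i * ‖(inner ℂ (G i) (F i) : ℂ)‖) :=
    Set.Finite.bddAbove (Set.finite_range _)
  have hle : ∀ i, q i * ‖(inner ℂ (G i) (F i) : ℂ)‖ ≤ S := fun i => le_ciSup hbdd i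
  let e := stdOrthonormalBasis ℂ H
  have htrace : ∑ i, (inner ℂ (F i) (G i) : ℂ) = (N : ℂ) := by
    have h1 : ∀ i, (inner ℂ (F i) (G i) : ℂ)
        = ∑ k, (inner ℂ (F i) (e k) : ℂ) * inner ℂ (e k) (G i) :=
      fun i => (e.sum_inner_mul_inner _ _).symm
    calc ∑ i, (inner ℂ (F i) (G i) : ℂ)
        = ∑ i, ∑ k, (inner ℂ (F i) (e k) : ℂ) * inner ℂ (e k) (G i) := by simp_rw [h1]
      _ = ∑ k, ∑ i, (inner ℂ (F i) (e k) : ℂ) * inner ℂ (e k) (G i) := Finset.sum_comm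
      _ = ∑ k, (inner ℂ (e k) (e k) : ℂ) := by
          refine Finset.sum_congr rfl fun k _ => ?_
          have h2 : (inner ℂ (e k) (∑ i, (inner ℂ (F i) (e k) : ℂ) • G i) : ℂ)
              = ∑ i, (inner ℂ (F i) (e k) : ℂ) * inner ℂ (e k) (G i) := by
            rw [inner_sum]; simp_rw [inner_smul_right]
          rw [← h2, hG (e k)]
      _ = (N : ℂ) := by
          have he := e.orthonormal
          rw [orthonormal_iff_ite] at he
          simp only [he, if_pos rfl]
          simp [hN]
  have habs : (N : ℝ) ≤ ∑ i, ‖(inner ℂ (F i) (G i) : ℂ)‖ := by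
    calc (N : ℝ) = ‖(N : ℂ)‖ := by
          simp
      _ = ‖∑ i, (inner ℂ (F i) (G i) : ℂ)‖ := by rw [htrace]
      _ ≤ ∑ i, ‖(inner ℂ (F i) (G i) : ℂ)‖ := by
          exact norm_sum_le _ _
  have hbound : ∀ i, ‖(inner ℂ (F i) (G i) : ℂ)‖ ≤ (1 / q i) * S := by
    intro i
    have h1 : ‖(inner ℂ (F i) (G i) : ℂ)‖
        = ‖(inner ℂ (G i) (F i) : ℂ)‖ := by
      rw [← inner_conj_symm (G i) (F i), Complex.norm_conj]
    have := hle i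
    have hq' := hq i
    rw [h1]
    rw [mul_comm] at this
    calc ‖(inner ℂ (G i) (F i) : ℂ)‖ ≤ S / q i := (le_div_iff₀ hq').mpr this
      _ = (1 / q i) * S := by ring
  have hsum : (N : ℝ) ≤ (N : ℝ) * S := by
    calc (N : ℝ) ≤ ∑ i, ‖(inner ℂ (F i) (G i) : ℂ)‖ := habs
      _ ≤ ∑ i, (1 / q i) * S := Finset.sum_le_sum fun i _ => hbound i
      _ = (∑ i, 1 / q i) * S := by rw [Finset.sum_mul]
      _ = (N : ℝ) * S := by rw [hqsum]
  nlinarith
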